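/- With the setup of the previous statement, if 1/h ∈ (−1/w_{i+1} − p_i, −1/w_i − p_i) ∩ [0, ∞) for some 1 ≤ i ≤ N−1, then the breakpoint p_i is a maximizer of g(p) = log(1 + p·h) + γ·U(p) over [0, p_N]. -/

import Mathlib

lemma aux_hasDeriv (h w x : ℝ) (hx : 0 < 1 + x * h) :
    HasDerivAt (fun y => Real.log (1 + y * h) + w * y) (h / (1 + x * h) + w) x := by
  have h1 : HasDerivAt (fun y : ℝ => 1 + y * h) h x := by
    simpa using ((hasDerivAt_id x).mul_const h).const_add 1
  have h2 := h1.log (ne_of_gt hx)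
  exact (h2.add ((hasDerivAt_id x).const_mul w)).congr_deriv (by ring)

lemma aux_mono {h w a b : ℝ} (hh : 0 < h) (ha : 0 ≤ a) (hab : a ≤ b)
    (hd : 0 ≤ h / (1 + b * h) + w) :
    MonotoneOn (fun x => Real.log (1 + x * h) + w * x) (Set.Icc a b) := by
  have hpos : ∀ x ∈ Set.Icc a b, 0 < 1 + x * h := by
    intro x hx; nlinarith [hx.1, hx.2]
  apply monotoneOn_of_deriv_nonneg (convex_Icc a b)
  · intro x hx
    exact (aux_hasDeriv h w x (hpos x hx)).continuousAt.continuousWithinAt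
  · intro x hx
    rw [interior_Icc] at hx
    exact (aux_hasDeriv h w x (hpos x (Set.Ioo_subset_Icc_self hx))).differentiableAt.differentiableWithinAt
  · intro x hx
    rw [interior_Icc] at hx
    have hp := hpos x (Set.Ioo_subset_Icc_self hx)
    rw [(aux_hasDeriv h w x hp).deriv]
    have h2 : h / (1 + b * h) ≤ h / (1 + x * h) := by
      apply div_le_div_of_nonneg_left hh.le hp
      nlinarith [hx.2]
    linarith

lemma aux_anti {h w a b : ℝ} (hh : 0 < h) (ha : 0 ≤ a) (hab : a ≤ b)
    (hd : h / (1 + a * h) + w ≤ 0) :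
    AntitoneOn (fun x => Real.log (1 + x * h) + w * x) (Set.Icc a b) := by
  have hpos : ∀ x ∈ Set.Icc a b, 0 < 1 + x * h := by
    intro x hx; nlinarith [hx.1, hx.2]
  apply antitoneOn_of_deriv_nonpos (convex_Icc a b)
  · intro x hx
    exact (aux_hasDeriv h w x (hpos x hx)).continuousAt.continuousWithinAt
  · intro x hx
    rw [interior_Icc] at hx
    exact (aux_hasDeriv h w x (hpos x (Set.Ioo_subset_Icc_self hx))).differentiableAt.differentiableWithinAt
  · intro x hx
    rw [interior_Icc] at hx
    have hp := hpos x (Set.Ioo_subset_Icc_self hx)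
    rw [(aux_hasDeriv h w x hp).deriv]
    have hpa : 0 < 1 + a * h := by nlinarith
    have h2 : h / (1 + x * h) ≤ h / (1 + a * h) := by
      apply div_le_div_of_nonneg_left hh.le hpa
      nlinarith [hx.1]
    linarith


theorem stmt_11 (N : ℕ) (hN : 1 ≤ N) (pt w : ℕ → ℝ) (U : ℝ → ℝ) (γ h : ℝ)
    (hpt0 : pt 0 = 0)
    (hptmono : ∀ i : ℕ, i < N → pt i < pt (i + 1))
    (hw1 : w 1 ≤ 0)
    (hwdec : ∀ i : ℕ, 1 ≤ i → i < N → w (i + 1) < w i)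
    (hlin : ∀ i : ℕ, 1 ≤ i → i ≤ N → ∀ x ∈ Set.Icc (pt (i - 1)) (pt i),
      γ * U x = γ * U (pt (i - 1)) + w i * (x - pt (i - 1)))
    (hh : 0 < h) (hγ : γ ∈ Set.Icc (0 : ℝ) 1)
    (i : ℕ) (hi1 : 1 ≤ i) (hiN : i ≤ N - 1)
    (hmem : 1 / h ∈ Set.Ioo (-1 / w (i + 1) - pt i) (-1 / w i - pt i) ∩ Set.Ici 0) :
    IsMaxOn (fun p => Real.log (1 + p * h) + γ * U p) (Set.Icc 0 (pt N)) (pt i) := by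
  obtain ⟨⟨hlo, hhi⟩, _⟩ := hmem
  have hiN' : i + 1 ≤ N := by omega
  have hiN'' : i ≤ N := by omega
  -- monotonicity of pt
  have ptmono_le : ∀ j k : ℕ, j ≤ k → k ≤ N → pt j ≤ pt k := by
    intro j k hjk hkN
    induction k with
    | zero => interval_cases j; exact le_rfl
    | succ m ih =>
      rcases Nat.eq_or_lt_of_le hjk with rfl | hlt
      · exact le_rfl
      · exact le_trans (ih (by omega) (by omega)) (hptmono m (by omega)).le
  have ptnonneg : ∀ j : ℕ, j ≤ N → 0 ≤ pt j := by
    intro j hj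
    have := ptmono_le 0 j (Nat.zero_le _) hj
    simpa [hpt0] using this
  have wanti : ∀ j k : ℕ, 1 ≤ j → j ≤ k → k ≤ N → w k ≤ w j := by
    intro j k hj hjk hkN
    induction k with
    | zero => omega
    | succ m ih =>
      rcases Nat.eq_or_lt_of_le hjk with rfl | hlt
      · exact le_rfl
      · exact le_trans (hwdec m (by omega) (by omega)).le (ih (by omega) (by omega))
  -- sign facts
  have hptipos : 0 < pt i := by
    have h1 : pt 0 < pt 1 := hptmono 0 (by omega)
    have h2 : pt 1 ≤ pt i := ptmono_le 1 i hi1 hiN''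
    rw [hpt0] at h1; linarith
  have hinvh : (0:ℝ) < 1 / h := by positivity
  have hwi_neg : w i < 0 := by
    by_contra hcon
    push_neg at hcon
    have : -1 / w i ≤ 0 := by
      rcases eq_or_lt_of_le hcon with heq | hpos
      · simp [← heq]
      · exact le_of_lt (div_neg_of_neg_of_pos (by norm_num) hpos)
    linarith
  have hwi1_neg : w (i + 1) < 0 := lt_trans (hwdec i hi1 (by omega)) hwi_neg
  have hA : 0 < 1 + pt i * h := by linarith [mul_nonneg hptipos.le hh.le]
  -- key inequality 1 : numerator at pt i with slope w i is positive
  have key1 : 0 < h + w i * (1 + pt i * h) := by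
    have hrw : (-1 : ℝ) / w i = 1 / (-w i) := by
      rw [div_neg, neg_div]
    rw [hrw] at hhi
    have hx : 1 / h + pt i < 1 / (-w i) := by linarith
    have hwpos : 0 < -w i := by linarith
    have hx' : (1 / h + pt i) * (-w i) < 1 := (lt_div_iff₀ hwpos).mp hx
    have hx'' := mul_lt_mul_of_pos_right hx' hh
    have e1 : (1 / h + pt i) * (-w i) * h = -(w i) + pt i * (-w i) * h := by
      field_simp; ring
    rw [e1, one_mul] at hx''
    nlinarith [hx'']
  -- key inequality 2 : numerator at pt i with slope w (i+1) is negative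
  have key2 : h + w (i + 1) * (1 + pt i * h) < 0 := by
    have hrw : (-1 : ℝ) / w (i + 1) = 1 / (-w (i + 1)) := by
      rw [div_neg, neg_div]
    rw [hrw] at hlo
    have hx : 1 / (-w (i + 1)) < 1 / h + pt i := by linarith
    have hwpos : 0 < -w (i + 1) := by linarith
    have hx' : 1 < (1 / h + pt i) * (-w (i + 1)) := (div_lt_iff₀ hwpos).mp hx
    have hx'' := mul_lt_mul_of_pos_right hx' hh
    have e1 : (1 / h + pt i) * (-w (i + 1)) * h = -(w (i + 1)) + pt i * (-w (i + 1)) * h := by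
      field_simp; ring
    rw [e1, one_mul] at hx''
    nlinarith [hx'']
  have keyd1 : 0 < h / (1 + pt i * h) + w i := by
    rw [div_add' _ _ _ hA.ne']
    exact div_pos key1 hA
  have keyd2 : h / (1 + pt i * h) + w (i + 1) < 0 := by
    rw [div_add' _ _ _ hA.ne']
    exact div_neg_of_neg_of_pos key2 hA
  set g : ℝ → ℝ := fun p => Real.log (1 + p * h) + γ * U p with hg
  -- segment increase, for segments up to i
  have seg_up : ∀ j : ℕ, j + 1 ≤ i → ∀ x ∈ Set.Icc (pt j) (pt (j + 1)), g x ≤ g (pt (j + 1)) := by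
    intro j hj x hx
    have hjN : j + 1 ≤ N := by omega
    have hlin' := hlin (j + 1) (by omega) hjN
    simp only [Nat.add_sub_cancel] at hlin'
    have hp0 : 0 ≤ pt j := ptnonneg j (by omega)
    have hple : pt j ≤ pt (j + 1) := (hptmono j (by omega)).le
    have hBpos : 0 < 1 + pt (j + 1) * h := by
      have hc := ptnonneg (j + 1) hjN
      linarith [mul_nonneg hc hh.le]
    have hd : 0 ≤ h / (1 + pt (j + 1) * h) + w (j + 1) := by
      have h1 : pt (j + 1) ≤ pt i := ptmono_le (j + 1) i hj hiN''
      have h2 : w i ≤ w (j + 1) := wanti (j + 1) i (by omega) hj hiN''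
      have h3 : h / (1 + pt i * h) ≤ h / (1 + pt (j + 1) * h) :=
        div_le_div_of_nonneg_left hh.le hBpos (by linarith [mul_le_mul_of_nonneg_right h1 hh.le])
      linarith
    have hmem2 : pt (j + 1) ∈ Set.Icc (pt j) (pt (j + 1)) := ⟨hple, le_rfl⟩
    have hmono := aux_mono (w := w (j + 1)) hh hp0 hple hd hx hmem2 hx.2
    have e1 := hlin' x hx
    have e2 := hlin' (pt (j + 1)) hmem2
    simp only [hg]
    rw [e1, e2]
    simp only at hmono
    ring_nf at hmono ⊢
    linarith [hmono]
  -- segment decrease, for segments after i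
  have seg_down : ∀ j : ℕ, i ≤ j → j + 1 ≤ N → ∀ x ∈ Set.Icc (pt j) (pt (j + 1)), g x ≤ g (pt j) := by
    intro j hj hjN x hx
    have hlin' := hlin (j + 1) (by omega) hjN
    simp only [Nat.add_sub_cancel] at hlin'
    have hp0 : 0 ≤ pt j := ptnonneg j (by omega)
    have hple : pt j ≤ pt (j + 1) := (hptmono j (by omega)).le
    have hApos : 0 < 1 + pt j * h := by linarith [mul_nonneg hp0 hh.le]
    have hd : h / (1 + pt j * h) + w (j + 1) ≤ 0 := by
      have h1 : pt i ≤ pt j := ptmono_le i j hj (by omega)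
      have h2 : w (j + 1) ≤ w (i + 1) := wanti (i + 1) (j + 1) (by omega) (by omega) hjN
      have h3 : h / (1 + pt j * h) ≤ h / (1 + pt i * h) :=
        div_le_div_of_nonneg_left hh.le hA (by linarith [mul_le_mul_of_nonneg_right h1 hh.le])
      linarith
    have hmem2 : pt j ∈ Set.Icc (pt j) (pt (j + 1)) := ⟨le_rfl, hple⟩
    have hanti := aux_anti (w := w (j + 1)) hh hp0 hple hd hmem2 hx hx.1
    have e1 := hlin' x hx
    have e2 := hlin' (pt j) hmem2
    simp only [hg]
    rw [e1, e2]
    simp only at hanti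
    ring_nf at hanti ⊢
    linarith [hanti]
  -- chain up to pt i
  have chain_up : ∀ m : ℕ, m ≤ i → ∀ k : ℕ, k ≤ m → g (pt k) ≤ g (pt m) := by
    intro m
    induction m with
    | zero => intro _ k hk; interval_cases k; exact le_rfl
    | succ m ih =>
      intro hmi k hk
      rcases Nat.eq_or_lt_of_le hk with rfl | hlt
      · exact le_rfl
      · have h1 : g (pt k) ≤ g (pt m) := ih (by omega) k (by omega)
        have hple : pt m ≤ pt (m + 1) := (hptmono m (by omega)).le
        have h2 : g (pt m) ≤ g (pt (m + 1)) :=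
          seg_up m hmi (pt m) ⟨le_rfl, hple⟩
        linarith
  -- chain down to pt i
  have chain_down : ∀ m : ℕ, i ≤ m → m ≤ N → g (pt m) ≤ g (pt i) := by
    intro m
    induction m with
    | zero => intro h1 _; omega
    | succ m ih =>
      intro him hmN
      rcases Nat.eq_or_lt_of_le him with heq | hlt
      · rw [heq]
      · have hple : pt m ≤ pt (m + 1) := (hptmono m (by omega)).le
        have h2 : g (pt (m + 1)) ≤ g (pt m) :=
          seg_down m (by omega) hmN (pt (m + 1)) ⟨hple, le_rfl⟩
        exact le_trans h2 (ih (by omega) (by omega))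
  -- locate a point in a segment
  have loc : ∀ p : ℝ, 0 ≤ p → p ≤ pt N → ∃ j : ℕ, j + 1 ≤ N ∧ pt j ≤ p ∧ p ≤ pt (j + 1) := by
    intro p hp0 hpN
    have gen : ∀ m : ℕ, 1 ≤ m → m ≤ N → p ≤ pt m →
        ∃ j : ℕ, j + 1 ≤ m ∧ pt j ≤ p ∧ p ≤ pt (j + 1) := by
      intro m
      induction m with
      | zero => omega
      | succ m ih =>
        intro _ hmN hpm
        rcases Nat.eq_zero_or_pos m with rfl | hm1
        · exact ⟨0, le_rfl, by rw [hpt0]; exact hp0, hpm⟩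
        · by_cases hcase : p ≤ pt m
          · obtain ⟨j, hj1, hj2, hj3⟩ := ih hm1 (by omega) hcase
            exact ⟨j, by omega, hj2, hj3⟩
          · exact ⟨m, le_rfl, (not_le.mp hcase).le, hpm⟩
    exact gen N hN (le_rfl) hpN
  -- conclude
  intro p hp
  simp only [Set.mem_Icc] at hp
  obtain ⟨j, hjN, hj1, hj2⟩ := loc p hp.1 hp.2
  show g p ≤ g (pt i)
  by_cases hcase : j + 1 ≤ i
  · have h1 : g p ≤ g (pt (j + 1)) := seg_up j hcase p ⟨hj1, hj2⟩
    have h2 : g (pt (j + 1)) ≤ g (pt i) := chain_up i le_rfl (j + 1) hcase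
    linarith
  · have hij : i ≤ j := by omega
    have h1 : g p ≤ g (pt j) := seg_down j hij hjN p ⟨hj1, hj2⟩
    have h2 : g (pt j) ≤ g (pt i) := chain_down j hij (by omega)
    linarith
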